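/- Every torsion class T in mod A is characterized by the bricks it contains: T equals the join in tors A of the torsion classes T(B) as B ranges over all bricks belonging to T. In particular, two torsion classes containing the same bricks are equal. -/

import Mathlib

/-! Preamble: the category `mod A` of finite-dimensional right `A`-modules,
torsion(-free) classes, the complete lattice `tors A`, functorially finite
torsion classes, bricks, etc. -/

open Function

/-- A bundled finite-dimensional (i.e. finitely generated) right `A`-module,
realized as a left module over `Aᵐᵒᵖ`. -/
structure ModA (A : Type) [Ring A] : Type 1 where
  carrier : Type
  [isAddCommGroup : AddCommGroup carrier]
  [isModule : Module Aᵐᵒᵖ carrier]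
  [isFinite : Module.Finite Aᵐᵒᵖ carrier]

attribute [instance] ModA.isAddCommGroup ModA.isModule ModA.isFinite

namespace ModA

variable {A : Type} [Ring A]

instance : CoeSort (ModA A) Type := ⟨ModA.carrier⟩

end ModA

section TorsionTheory

variable {A : Type} [Ring A]

/-- A torsion class: a class of finite-dimensional right `A`-modules containing the
zero modules, closed under quotient modules and under extensions. -/
def IsTorsionClass (T : Set (ModA A)) : Prop :=
  (∀ N : ModA A, Subsingleton N.carrier → N ∈ T) ∧
  (∀ M N : ModA A, M ∈ T → ∀ f : M.carrier →ₗ[Aᵐᵒᵖ] N.carrier, Surjective f → N ∈ T) ∧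
  (∀ (X Y Z : ModA A) (f : X.carrier →ₗ[Aᵐᵒᵖ] Y.carrier) (g : Y.carrier →ₗ[Aᵐᵒᵖ] Z.carrier),
    Injective f → Surjective g → LinearMap.range f = LinearMap.ker g →
    X ∈ T → Z ∈ T → Y ∈ T)

/-- A torsion-free class: a class of finite-dimensional right `A`-modules containing the
zero modules, closed under submodules and under extensions. -/
def IsTorsionFreeClass (F : Set (ModA A)) : Prop :=
  (∀ N : ModA A, Subsingleton N.carrier → N ∈ F) ∧
  (∀ M N : ModA A, M ∈ F → ∀ f : N.carrier →ₗ[Aᵐᵒᵖ] M.carrier, Injective f → N ∈ F) ∧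
  (∀ (X Y Z : ModA A) (f : X.carrier →ₗ[Aᵐᵒᵖ] Y.carrier) (g : Y.carrier →ₗ[Aᵐᵒᵖ] Z.carrier),
    Injective f → Surjective g → LinearMap.range f = LinearMap.ker g →
    X ∈ F → Z ∈ F → Y ∈ F)

theorem isTorsionClass_sInter {S : Set (Set (ModA A))} (h : ∀ T ∈ S, IsTorsionClass T) :
    IsTorsionClass (⋂₀ S) := by
  refine ⟨fun N hN => ?_, fun M N hM f hf => ?_, fun X Y Z f g hf hg he hX hZ => ?_⟩
  · exact Set.mem_sInter.2 fun T hT => (h T hT).1 N hN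
  · exact Set.mem_sInter.2 fun T hT => (h T hT).2.1 M N (Set.mem_sInter.1 hM T hT) f hf
  · exact Set.mem_sInter.2 fun T hT =>
      (h T hT).2.2 X Y Z f g hf hg he (Set.mem_sInter.1 hX T hT) (Set.mem_sInter.1 hZ T hT)

theorem isTorsionFreeClass_sInter {S : Set (Set (ModA A))} (h : ∀ F ∈ S, IsTorsionFreeClass F) :
    IsTorsionFreeClass (⋂₀ S) := by
  refine ⟨fun N hN => ?_, fun M N hM f hf => ?_, fun X Y Z f g hf hg he hX hZ => ?_⟩
  · exact Set.mem_sInter.2 fun T hT => (h T hT).1 N hN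
  · exact Set.mem_sInter.2 fun T hT => (h T hT).2.1 M N (Set.mem_sInter.1 hM T hT) f hf
  · exact Set.mem_sInter.2 fun T hT =>
      (h T hT).2.2 X Y Z f g hf hg he (Set.mem_sInter.1 hX T hT) (Set.mem_sInter.1 hZ T hT)

end TorsionTheory

/-- `tors A`: the poset of all torsion classes in `mod A`, ordered by inclusion. -/
def Tors (A : Type) [Ring A] : Type 1 := {T : Set (ModA A) // IsTorsionClass T}

/-- `torf A`: the poset of all torsion-free classes in `mod A`, ordered by inclusion. -/
def Torf (A : Type) [Ring A] : Type 1 := {F : Set (ModA A) // IsTorsionFreeClass F}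

namespace Tors

variable {A : Type} [Ring A]

instance : PartialOrder (Tors A) := Subtype.partialOrder _

instance : InfSet (Tors A) :=
  ⟨fun S => ⟨⋂₀ (Subtype.val '' S),
    isTorsionClass_sInter (by rintro _ ⟨T, _, rfl⟩; exact T.2)⟩⟩

/-- `tors A` is a complete lattice, with meets given by intersections. -/
instance : CompleteLattice (Tors A) :=
  completeLatticeOfInf _ (fun S =>
    ⟨fun T hT => Set.sInter_subset_of_mem ⟨T, hT, rfl⟩,
     fun L hL => Set.subset_sInter (by rintro _ ⟨T, hT, rfl⟩; exact hL hT)⟩)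

end Tors

namespace Torf

variable {A : Type} [Ring A]

instance : PartialOrder (Torf A) := Subtype.partialOrder _

instance : InfSet (Torf A) :=
  ⟨fun S => ⟨⋂₀ (Subtype.val '' S),
    isTorsionFreeClass_sInter (by rintro _ ⟨T, _, rfl⟩; exact T.2)⟩⟩

/-- `torf A` is a complete lattice, with meets given by intersections. -/
instance : CompleteLattice (Torf A) :=
  completeLatticeOfInf _ (fun S =>
    ⟨fun T hT => Set.sInter_subset_of_mem ⟨T, hT, rfl⟩,
     fun L hL => Set.subset_sInter (by rintro _ ⟨T, hT, rfl⟩; exact hL hT)⟩)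

end Torf

section Defs

variable {A : Type} [Ring A]

/-- `T(C)`: the smallest torsion class containing the class `C` of modules. -/
def torsGen (C : Set (ModA A)) : Tors A := sInf {T : Tors A | C ⊆ T.1}

/-- `Fac M`: the class of all quotients of finite direct sums of copies of `M`. -/
def Fac (M : ModA A) : Set (ModA A) :=
  {N | ∃ (k : ℕ) (f : (Fin k → M.carrier) →ₗ[Aᵐᵒᵖ] N.carrier), Surjective f}

/-- A class of modules is functorially finite (as a torsion class) when it is
of the form `Fac M`. -/
def IsFFSet (X : Set (ModA A)) : Prop := ∃ M : ModA A, X = Fac M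

/-- A torsion class is functorially finite when it is of the form `Fac M`. -/
def IsFunctoriallyFinite (T : Tors A) : Prop := IsFFSet T.1

/-- The right Hom-orthogonal class `X^⊥`. -/
def rightPerp (X : Set (ModA A)) : Set (ModA A) :=
  {M | ∀ N ∈ X, ∀ f : N.carrier →ₗ[Aᵐᵒᵖ] M.carrier, f = 0}

/-- The left Hom-orthogonal class `^⊥X`. -/
def leftPerp (X : Set (ModA A)) : Set (ModA A) :=
  {N | ∀ M ∈ X, ∀ f : N.carrier →ₗ[Aᵐᵒᵖ] M.carrier, f = 0}

/-- A brick: a nonzero module all of whose nonzero endomorphisms are isomorphisms. -/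
def IsBrick (B : ModA A) : Prop :=
  Nontrivial B.carrier ∧
    ∀ f : B.carrier →ₗ[Aᵐᵒᵖ] B.carrier, f ≠ 0 → Bijective f

end Defs

/-- `f-tors A`: the poset of functorially finite torsion classes, ordered by inclusion. -/
def FTors (A : Type) [Ring A] : Type 1 := {T : Tors A // IsFunctoriallyFinite T}

instance {A : Type} [Ring A] : PartialOrder (FTors A) := Subtype.partialOrder _

section Simples

variable (A : Type) [Ring A]

/-- The type of simple objects of `mod A`. -/
def SimpleMod : Type 1 := {S : ModA A // IsSimpleModule Aᵐᵒᵖ S.carrier}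

/-- Isomorphism of simple modules, as an equivalence relation. -/
def simpleIsoSetoid : Setoid (SimpleMod A) where
  r S T := Nonempty (S.1.carrier ≃ₗ[Aᵐᵒᵖ] T.1.carrier)
  iseqv := ⟨fun _ => ⟨LinearEquiv.refl _ _⟩, fun ⟨e⟩ => ⟨e.symm⟩, fun ⟨e⟩ ⟨f⟩ => ⟨e.trans f⟩⟩

/-- The number of isomorphism classes of simple right `A`-modules. -/
noncomputable def numSimples : ℕ := Nat.card (Quotient (simpleIsoSetoid A))

end Simples

section Lattice

/-- Upper semimodularity: if `a` and `b` both cover `a ⊓ b`, then `a ⊔ b` covers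
both `a` and `b`. -/
def UpperSemimodular (α : Type*) [Lattice α] : Prop :=
  ∀ a b : α, a ⊓ b ⋖ a → a ⊓ b ⋖ b → a ⋖ a ⊔ b ∧ b ⋖ a ⊔ b

/-- Lower semimodularity: if `a ⊔ b` covers both `a` and `b`, then `a` and `b` both
cover `a ⊓ b`. -/
def LowerSemimodular (α : Type*) [Lattice α] : Prop :=
  ∀ a b : α, a ⋖ a ⊔ b → b ⋖ a ⊔ b → a ⊓ b ⋖ a ∧ a ⊓ b ⋖ b

/-- An element `x` of a complete lattice is completely join irreducible if the join of
all elements strictly below `x` is strictly below `x`. -/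
def CompletelyJoinIrred {α : Type*} [CompleteLattice α] (x : α) : Prop :=
  sSup {y | y < x} < x

end Lattice

/-- The statement that the poset `f-tors A` forms a lattice: any two functorially finite
torsion classes have a least upper bound and a greatest lower bound within `f-tors A`. -/
def FTorsIsLattice (A : Type) [Ring A] : Prop :=
  ∀ a b : FTors A, (∃ m, IsGLB {a, b} m) ∧ (∃ j, IsLUB {a, b} j)

/-- Upper semimodularity for the poset `f-tors A`. -/
def FTorsUpperSemimodular (A : Type) [Ring A] : Prop :=
  ∀ a b m j : FTors A, IsGLB {a, b} m → IsLUB {a, b} j →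
    m ⋖ a → m ⋖ b → a ⋖ j ∧ b ⋖ j

/-- Lower semimodularity for the poset `f-tors A`. -/
def FTorsLowerSemimodular (A : Type) [Ring A] : Prop :=
  ∀ a b m j : FTors A, IsGLB {a, b} m → IsLUB {a, b} j →
    a ⋖ j → b ⋖ j → m ⋖ a ∧ m ⋖ b

/-- A realization of a `K`-algebra `A` as a finite product of finite-dimensional
local `K`-algebras. -/
structure LocalAlgebraFactorization (K : Type) [Field K] (A : Type) [Ring A] [Algebra K A] where
  m : ℕ
  B : Fin m → Type
  [ringB : ∀ i, Ring (B i)]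
  [algB : ∀ i, Algebra K (B i)]
  finB : ∀ i, FiniteDimensional K (B i)
  localB : ∀ i, IsLocalRing (B i)
  equiv : A ≃ₐ[K] ∀ i, B i

/-- An indecomposable module: nonzero, and not the internal direct sum of two nonzero
submodules. -/
def IsIndecomposableModule (R M : Type*) [Ring R] [AddCommGroup M] [Module R M] : Prop :=
  Nontrivial M ∧ ∀ S T : Submodule R M, IsCompl S T → S = ⊥ ∨ T = ⊥


section Aux
open Module

variable {K A : Type} [Field K] [Ring A] [Algebra K A]

/-- K-module structure on an `Aᵐᵒᵖ`-module via the algebra map. -/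
noncomputable def modK (K A : Type) [Field K] [Ring A] [Algebra K A]
    (M : Type) [AddCommMonoid M] [Module Aᵐᵒᵖ M] : Module K M :=
  Module.compHom M (algebraMap K Aᵐᵒᵖ)

theorem modK_tower (M : Type) [AddCommMonoid M] [Module Aᵐᵒᵖ M] :
    letI := modK K A M; IsScalarTower K Aᵐᵒᵖ M := by
  letI := modK K A M
  refine ⟨fun k a x => ?_⟩
  show (k • a) • x = algebraMap K Aᵐᵒᵖ k • (a • x)
  rw [Algebra.smul_def, mul_smul]

/-- An `Aᵐᵒᵖ`-linear map is K-linear. -/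
def toKLin {M N : Type} [AddCommGroup M] [Module Aᵐᵒᵖ M] [AddCommGroup N] [Module Aᵐᵒᵖ N]
    [Module K M] [Module K N] [IsScalarTower K Aᵐᵒᵖ M] [IsScalarTower K Aᵐᵒᵖ N]
    (f : M →ₗ[Aᵐᵒᵖ] N) : M →ₗ[K] N where
  toFun := f
  map_add' := f.map_add
  map_smul' k x := by
    simp only [RingHom.id_apply]
    have h1 : k • x = (k • (1:Aᵐᵒᵖ)) • x := by rw [smul_assoc, one_smul]
    have h2 : k • f x = (k • (1:Aᵐᵒᵖ)) • f x := by rw [smul_assoc, one_smul]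
    rw [h1, h2, f.map_smul]

theorem lt1 {V W : Type} [AddCommGroup V] [Module K V] [AddCommGroup W] [Module K W]
    [FiniteDimensional K W] (f : V →ₗ[K] W) (hi : Injective f) (hs : ¬ Surjective f) :
    finrank K V < finrank K W := by
  have h1 : finrank K V = finrank K (LinearMap.range f) :=
    (LinearEquiv.ofInjective f hi).finrank_eq
  have h2 : LinearMap.range f < ⊤ :=
    lt_top_iff_ne_top.2 (fun h => hs (LinearMap.range_eq_top.1 h))
  rw [h1]; exact Submodule.finrank_lt h2.ne

theorem lt2 {V W : Type} [AddCommGroup V] [Module K V] [AddCommGroup W] [Module K W]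
    [FiniteDimensional K V] (f : V →ₗ[K] W) (hs : Surjective f) (hi : ¬ Injective f) :
    finrank K W < finrank K V := by
  have h1 : finrank K W = finrank K (V ⧸ LinearMap.ker f) :=
    (f.quotKerEquivOfSurjective hs).finrank_eq.symm
  have h2 := Submodule.finrank_quotient_add_finrank (LinearMap.ker f)
  have h3 : LinearMap.ker f ≠ ⊥ := fun h => hi (LinearMap.ker_eq_bot.1 h)
  have h4 : 0 < finrank K (LinearMap.ker f) := by
    rw [finrank_pos_iff]
    exact Submodule.nontrivial_iff_ne_bot.2 h3
  omega

theorem modK_finite (K : Type) [Field K] [Algebra K A] [FiniteDimensional K A] (M : Type) [AddCommGroup M] [Module Aᵐᵒᵖ M] [Module.Finite Aᵐᵒᵖ M] :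
    letI := modK K A M; FiniteDimensional K M := by
  letI := modK K A M
  haveI := modK_tower (K := K) (A := A) M
  exact Module.Finite.trans Aᵐᵒᵖ M

/-- The K-dimension of a finite-dimensional A-module. -/
noncomputable def dimK (K : Type) [Field K] {A : Type} [Ring A] [Algebra K A] (M : ModA A) : ℕ :=
  letI := modK K A M.carrier; finrank K M.carrier

/-- Key lemma: if a torsion class `J` contains all the bricks of a torsion class `T`,
then it contains all of `T`. -/
theorem key (K : Type) [Field K] [Algebra K A] [FiniteDimensional K A] (T J : Tors A) (hJ : ∀ B : ModA A, IsBrick B → B ∈ T.1 → B ∈ J.1) :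
    ∀ M : ModA A, M ∈ T.1 → M ∈ J.1 := by
  suffices h : ∀ n : ℕ, ∀ M : ModA A, dimK K M ≤ n → M ∈ T.1 → M ∈ J.1 by
    exact fun M hM => h (dimK K M) M le_rfl hM
  intro n
  induction n with
  | zero =>
    intro M hd _
    letI := modK K A M.carrier
    haveI := modK_tower (K := K) (A := A) M.carrier
    haveI : FiniteDimensional K M.carrier := modK_finite K M.carrier
    have : finrank K M.carrier = 0 := Nat.le_zero.1 hd
    have hsub : Subsingleton M.carrier := by
      rwa [finrank_zero_iff] at this
    exact J.2.1 M hsub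
  | succ n ih =>
    intro M hd hMT
    letI := modK K A M.carrier
    haveI := modK_tower (K := K) (A := A) M.carrier
    haveI : FiniteDimensional K M.carrier := modK_finite K M.carrier
    by_cases hsub : Subsingleton M.carrier
    · exact J.2.1 M hsub
    haveI hnt : Nontrivial M.carrier := not_subsingleton_iff_nontrivial.1 hsub
    by_cases hbr : IsBrick M
    · exact hJ M hbr hMT
    -- extract a nonzero non-bijective endomorphism
    have : ∃ f : M.carrier →ₗ[Aᵐᵒᵖ] M.carrier, f ≠ 0 ∧ ¬ Bijective f := by
      by_contra hc
      push_neg at hc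
      exact hbr ⟨hnt, hc⟩
    obtain ⟨f, hf0, hfb⟩ := this
    set fK : M.carrier →ₗ[K] M.carrier := toKLin f with hfK
    have hfun : ⇑fK = ⇑f := rfl
    have hni : ¬ Injective f := by
      intro hi
      have : Surjective fK := LinearMap.injective_iff_surjective.1 (hfun ▸ hi)
      exact hfb ⟨hi, hfun ▸ this⟩
    have hns : ¬ Surjective f := by
      intro hs
      have : Injective fK := LinearMap.injective_iff_surjective.2 (hfun ▸ hs)
      exact hfb ⟨hfun ▸ this, hs⟩
    -- the image submodule
    set S : Submodule Aᵐᵒᵖ M.carrier := LinearMap.range f with hS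
    haveI : IsNoetherian K M.carrier := inferInstance
    haveI : IsNoetherian Aᵐᵒᵖ M.carrier := isNoetherian_of_tower K inferInstance
    haveI : Module.Finite Aᵐᵒᵖ ↥S := Module.Finite.iff_fg.2 (IsNoetherian.noetherian S)
    haveI : Module.Finite Aᵐᵒᵖ (M.carrier ⧸ S) :=
      Module.Finite.of_surjective S.mkQ (Submodule.mkQ_surjective S)
    set MS : ModA A := ⟨↥S⟩ with hMS
    set MQ : ModA A := ⟨M.carrier ⧸ S⟩ with hMQ
    -- both are quotients of M, hence in T
    have hMST : MS ∈ T.1 := T.2.2.1 M MS hMT f.rangeRestrict f.surjective_rangeRestrict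
    have hMQT : MQ ∈ T.1 := T.2.2.1 M MQ hMT S.mkQ (Submodule.mkQ_surjective S)
    -- dimensions drop
    letI := modK K A MS.carrier
    haveI := modK_tower (K := K) (A := A) MS.carrier
    letI := modK K A MQ.carrier
    haveI := modK_tower (K := K) (A := A) MQ.carrier
    have hSne : S ≠ ⊥ := by
      intro h
      apply hf0
      ext x
      have : f x ∈ S := LinearMap.mem_range_self f x
      rw [h] at this
      simpa using this
    have hdS : dimK K MS < dimK K M := by
      refine lt1 (toKLin (S.subtype)) ?_ ?_
      · exact Subtype.val_injective
      · intro hs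
        apply hns
        intro y
        obtain ⟨⟨x, hx⟩, hxy⟩ := hs y
        obtain ⟨z, hz⟩ := hx
        exact ⟨z, by rw [hz]; exact hxy⟩
    have hdQ : dimK K MQ < dimK K M := by
      refine lt2 (toKLin S.mkQ) (Submodule.mkQ_surjective S) ?_
      intro hi
      apply hSne
      ext x
      simp only [Submodule.mem_bot]
      constructor
      · intro hx
        have : S.mkQ x = S.mkQ 0 := by
          simp [Submodule.Quotient.mk_eq_zero, hx]
        exact hi this
      · rintro rfl; exact S.zero_mem
    -- apply induction hypothesis
    have hMSJ : MS ∈ J.1 := ih MS (by omega) hMST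
    have hMQJ : MQ ∈ J.1 := ih MQ (by omega) hMQT
    -- M is an extension of MQ by MS
    exact J.2.2.2 MS M MQ S.subtype S.mkQ Subtype.val_injective (Submodule.mkQ_surjective S)
      (by rw [Submodule.range_subtype, Submodule.ker_mkQ]) hMSJ hMQJ

end Aux

section Main

variable {A : Type} [Ring A]

theorem mem_torsGen_self (B : ModA A) : B ∈ (torsGen {B}).1 := by
  show B ∈ ⋂₀ (Subtype.val '' {T : Tors A | ({B} : Set (ModA A)) ⊆ T.1})
  exact Set.mem_sInter.2 (by rintro _ ⟨U, hU, rfl⟩; exact hU rfl)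

theorem torsGen_le {B : ModA A} {T : Tors A} (h : B ∈ T.1) : torsGen {B} ≤ T :=
  sInf_le (by simpa [Set.singleton_subset_iff] using h)

theorem brickSet_eq (T : Tors A) :
    {X : Tors A | ∃ B : ModA A, IsBrick B ∧ B ∈ T.1 ∧ X = torsGen {B}}
      = (fun B => torsGen {B}) '' {B : ModA A | IsBrick B ∧ B ∈ T.1} := by
  ext X
  constructor
  · rintro ⟨B, h1, h2, rfl⟩; exact ⟨B, ⟨h1, h2⟩, rfl⟩
  · rintro ⟨B, ⟨h1, h2⟩, rfl⟩; exact ⟨B, h1, h2, rfl⟩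

/-- every torsion class `T` is the join of the `T(B)` over the bricks `B`
it contains; in particular two torsion classes containing the same bricks coincide. -/
theorem stmt13 (K A : Type) [Field K] [IsAlgClosed K] [Ring A] [Algebra K A]
    [FiniteDimensional K A] :
    (∀ T : Tors A,
      T = sSup {X : Tors A | ∃ B : ModA A, IsBrick B ∧ B ∈ T.1 ∧ X = torsGen {B}}) ∧
    (∀ T U : Tors A,
      {B : ModA A | IsBrick B ∧ B ∈ T.1} = {B : ModA A | IsBrick B ∧ B ∈ U.1} → T = U) := by
  have main : ∀ T : Tors A,
      T = sSup {X : Tors A | ∃ B : ModA A, IsBrick B ∧ B ∈ T.1 ∧ X = torsGen {B}} := by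
    intro T
    set S := {X : Tors A | ∃ B : ModA A, IsBrick B ∧ B ∈ T.1 ∧ X = torsGen {B}} with hSdef
    refine le_antisymm ?_ ?_
    · -- T ≤ sSup S via the key lemma
      have hJ : ∀ B : ModA A, IsBrick B → B ∈ T.1 → B ∈ (sSup S).1 := by
        intro B hb hBT
        have hX : torsGen {B} ∈ S := ⟨B, hb, hBT, rfl⟩
        exact le_sSup hX (mem_torsGen_self B)
      exact fun M hM => key K T (sSup S) hJ M hM
    · refine sSup_le ?_
      rintro X ⟨B, hb, hBT, rfl⟩
      exact torsGen_le hBT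
  refine ⟨main, fun T U h => ?_⟩
  rw [main T, main U, brickSet_eq, brickSet_eq, h]

end Main
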